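/- arXiv:1206.3898 — 8 statements merged into one kernel-verified Lean document; each statement's English description precedes it below -/
import Mathlib

section
/- Let 0 ≤ s < 1/2. Then sup over integers ξ, ξ₁ with ξ ξ₁ (ξ - ξ₁) ≠ 0 of ⟨ξ₁⟩^s ⟨ξ-ξ₁⟩^s / (|ξ₁| |ξ-ξ₁|^s ⟨ξ⟩^s) is finite, where ⟨x⟩ := 1 + |x|. -/
noncomputable def jap (x : ℝ) : ℝ := 1 + |x|

theorem bilinear_multiplier_bound_X
    (s : ℝ) (hs0 : 0 ≤ s) (hs : s < 1 / 2) :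
    ∃ C : ℝ, ∀ ξ ξ₁ : ℤ, ξ * ξ₁ * (ξ - ξ₁) ≠ 0 →
      jap (ξ₁ : ℝ) ^ s * jap ((ξ : ℝ) - (ξ₁ : ℝ)) ^ s /
        (|(ξ₁ : ℝ)| * |(ξ : ℝ) - (ξ₁ : ℝ)| ^ s * jap (ξ : ℝ) ^ s) ≤ C := by
  refine ⟨4 ^ s, ?_⟩
  intro ξ ξ₁ h
  rw [mul_ne_zero_iff, mul_ne_zero_iff] at h
  obtain ⟨⟨hξ, hξ₁⟩, hd⟩ := h
  set a := |(ξ₁ : ℝ)| with ha_def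
  set b := |(ξ : ℝ) - (ξ₁ : ℝ)| with hb_def
  have ha : (1 : ℝ) ≤ a := by
    rw [ha_def, ← Int.cast_abs]
    exact_mod_cast Int.one_le_abs hξ₁
  have hb : (1 : ℝ) ≤ b := by
    rw [hb_def, show (ξ : ℝ) - (ξ₁ : ℝ) = ((ξ - ξ₁ : ℤ) : ℝ) by push_cast; ring,
      ← Int.cast_abs]
    exact_mod_cast Int.one_le_abs hd
  have ha0 : (0 : ℝ) < a := by linarith
  have hb0 : (0 : ℝ) < b := by linarith
  have hj : (1 : ℝ) ≤ jap (ξ : ℝ) := by simp [jap]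
  have hjs : (1 : ℝ) ≤ jap (ξ : ℝ) ^ s := Real.one_le_rpow hj hs0
  have hden : (0 : ℝ) < a * b ^ s * jap (ξ : ℝ) ^ s := by positivity
  rw [div_le_iff₀ hden]
  have h1 : jap (ξ₁ : ℝ) ^ s ≤ (2 * a) ^ s :=
    Real.rpow_le_rpow (by simp [jap]; positivity) (by simp [jap, ← ha_def]; linarith) hs0
  have h2 : jap ((ξ : ℝ) - (ξ₁ : ℝ)) ^ s ≤ (2 * b) ^ s :=
    Real.rpow_le_rpow (by simp [jap]; positivity) (by simp [jap, ← hb_def]; linarith) hs0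
  have h3 : a ^ s ≤ a := by
    calc a ^ s ≤ a ^ (1 : ℝ) := Real.rpow_le_rpow_of_exponent_le ha (by linarith)
    _ = a := Real.rpow_one a
  have h4eq : (4 : ℝ) ^ s = 2 ^ s * 2 ^ s := by
    rw [show (4 : ℝ) = 2 * 2 by norm_num, Real.mul_rpow (by norm_num) (by norm_num)]
  calc jap (ξ₁ : ℝ) ^ s * jap ((ξ : ℝ) - (ξ₁ : ℝ)) ^ s
      ≤ (2 * a) ^ s * (2 * b) ^ s := by
        apply mul_le_mul h1 h2 (Real.rpow_nonneg (by simp [jap]; positivity) s)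
        positivity
    _ = (2 ^ s * 2 ^ s) * (a ^ s * b ^ s) := by
        rw [Real.mul_rpow (by norm_num) ha0.le, Real.mul_rpow (by norm_num) hb0.le]; ring
    _ ≤ (2 ^ s * 2 ^ s) * (a * b ^ s * jap (ξ : ℝ) ^ s) := by
        apply mul_le_mul_of_nonneg_left _ (by positivity)
        calc a ^ s * b ^ s ≤ a * b ^ s :=
              mul_le_mul_of_nonneg_right h3 (Real.rpow_nonneg hb0.le s)
        _ ≤ a * b ^ s * jap (ξ : ℝ) ^ s := le_mul_of_one_le_right (by positivity) hjs
    _ = 4 ^ s * (a * b ^ s * jap (ξ : ℝ) ^ s) := by rw [h4eq]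
end

section
/- Let ξ₁, ξ₂, ξ₃ be nonzero integers with (ξ₁+ξ₂)(ξ₂+ξ₃)(ξ₃+ξ₁) ≠ 0, ξ := ξ₁+ξ₂+ξ₃, and suppose |ξ| is comparable to |ξ₁| and |ξ₁| ≫ |ξ₃| (say |ξ₁| ≥ 4|ξ₃| and |ξ| ≥ |ξ₁|/2). Then |ξ₁+ξ₂| · |ξ₂+ξ₃| · |ξ₃+ξ₁| ≥ c |ξ₁|² · min(|ξ₁+ξ₂|, |ξ₂+ξ₃|) for an absolute constant c > 0. -/
theorem nonresonance_gain_square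
    : ∃ c : ℝ, 0 < c ∧ ∀ ξ₁ ξ₂ ξ₃ : ℤ, ξ₁ ≠ 0 → ξ₂ ≠ 0 → ξ₃ ≠ 0 →
      (ξ₁ + ξ₂) * (ξ₂ + ξ₃) * (ξ₃ + ξ₁) ≠ 0 →
      |ξ₁| ≥ 4 * |ξ₃| → |ξ₁ + ξ₂ + ξ₃| ≥ |ξ₁| / 2 →
      (|(ξ₁ : ℝ) + ξ₂| * |(ξ₂ : ℝ) + ξ₃| * |(ξ₃ : ℝ) + ξ₁| : ℝ) ≥
        c * |(ξ₁ : ℝ)| ^ 2 * min |(ξ₁ : ℝ) + ξ₂| |(ξ₂ : ℝ) + ξ₃| := by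
  refine ⟨1/16, by norm_num, ?_⟩
  intro ξ₁ ξ₂ ξ₃ h1 h2 h3 hnr hbig hcomp
  have ha : (|ξ₁| : ℤ) ≤ 8 * |ξ₁ + ξ₂| := by
    simp only [Int.abs_eq_natAbs] at *; omega
  have hd : 3 * (|ξ₁| : ℤ) ≤ 4 * |ξ₃ + ξ₁| := by
    simp only [Int.abs_eq_natAbs] at *; omega
  have haR : |(ξ₁ : ℝ)| ≤ 8 * |(ξ₁ : ℝ) + ξ₂| := by exact_mod_cast ha
  have hdR : 3 * |(ξ₁ : ℝ)| ≤ 4 * |(ξ₃ : ℝ) + ξ₁| := by exact_mod_cast hd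
  set A := |(ξ₁ : ℝ)| with hA
  set a := |(ξ₁ : ℝ) + ξ₂| with haa
  set b := |(ξ₂ : ℝ) + ξ₃| with hbb
  set d := |(ξ₃ : ℝ) + ξ₁| with hdd
  have hA0 : 0 ≤ A := abs_nonneg _
  have ha0 : 0 ≤ a := abs_nonneg _
  have hb0 : 0 ≤ b := abs_nonneg _
  have hd0 : 0 ≤ d := abs_nonneg _
  have key : A * (3 * A) ≤ (8 * a) * (4 * d) :=
    mul_le_mul haR hdR (by linarith) (by linarith)
  rcases le_total a b with h | h
  · rw [min_eq_left h]
    have hab : A ≤ 8 * b := by linarith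
    have key2 : A * (3 * A) ≤ (8 * b) * (4 * d) :=
      mul_le_mul hab hdR (by linarith) (by linarith)
    nlinarith [mul_le_mul_of_nonneg_left key2 ha0]
  · rw [min_eq_right h]
    nlinarith [mul_le_mul_of_nonneg_left key hb0]
end

section
/- Let s ≥ 0, t ∈ ℝ, u₀ ∈ H^{-s}(T) with û₀(0) = 0, and v ∈ H^α(T) for some α ∈ ℝ. Define the phase-shifted function Sv by (Sv)^(ξ) = exp(-2i t |û₀(ξ)|²/ξ) v̂(ξ) for ξ ≠ 0 and (Sv)^(0) = v̂(0). Then ‖Sv − v‖_{H^{α+1−2s}} ≤ C |t| ‖u₀‖²_{H^{-s}} ‖v‖_{H^α} for an absolute constant C. -/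
/-- Sobolev `H^σ` norm of a Fourier coefficient sequence on the circle. -/
noncomputable def Hnorm (σ : ℝ) (a : ℤ → ℂ) : ℝ :=
  Real.sqrt (∑' ξ : ℤ, jap (ξ : ℝ) ^ (2 * σ) * ‖a ξ‖ ^ 2)

lemma exp_I_sub_one_le (θ : ℝ) : ‖Complex.exp (θ * Complex.I) - 1‖ ≤ |θ| := by
  rw [Complex.exp_mul_I]
  have h1 : Complex.cos θ + Complex.sin θ * Complex.I - 1
      = ((Real.cos θ - 1 : ℝ) : ℂ) + (Real.sin θ : ℝ) * Complex.I := by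
    push_cast [← Complex.ofReal_cos, ← Complex.ofReal_sin]; ring
  rw [h1, Complex.norm_add_mul_I]
  have h2 : (Real.cos θ - 1) ^ 2 + Real.sin θ ^ 2 ≤ θ ^ 2 := by
    have hs := Real.sin_sq_le_sq (x := θ)
    have hc := Real.sin_sq_le_sq (x := θ / 2)
    have hcos : Real.cos θ = 1 - 2 * Real.sin (θ / 2) ^ 2 := by
      have h2' : Real.cos (2 * (θ / 2)) = 2 * Real.cos (θ / 2) ^ 2 - 1 := Real.cos_two_mul _
      have h := Real.sin_sq_add_cos_sq (θ / 2)
      rw [show 2 * (θ / 2) = θ by ring] at h2'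
      nlinarith
    have hpyth := Real.sin_sq_add_cos_sq θ
    nlinarith [sq_nonneg (Real.sin (θ/2)), _root_.sq_abs θ]
  calc Real.sqrt ((Real.cos θ - 1) ^ 2 + Real.sin θ ^ 2) ≤ Real.sqrt (θ ^ 2) :=
        Real.sqrt_le_sqrt h2
    _ = |θ| := Real.sqrt_sq_eq_abs θ

lemma jap_pos (x : ℝ) : 0 < jap x := by
  unfold jap; positivity

theorem phase_shift_smoothing :
    ∃ C : ℝ, 0 < C ∧ ∀ (s α t : ℝ), 0 ≤ s → ∀ u₀ v : ℤ → ℂ,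
      u₀ 0 = 0 →
      Summable (fun ξ : ℤ => jap (ξ : ℝ) ^ (2 * (-s)) * ‖u₀ ξ‖ ^ 2) →
      Summable (fun ξ : ℤ => jap (ξ : ℝ) ^ (2 * α) * ‖v ξ‖ ^ 2) →
      Hnorm (α + 1 - 2 * s)
          (fun ξ : ℤ =>
            (if ξ = 0 then v 0
              else Complex.exp (-2 * Complex.I * t * (‖u₀ ξ‖ ^ 2 : ℝ) / (ξ : ℂ)) * v ξ)
              - v ξ) ≤
        C * |t| * Hnorm (-s) u₀ ^ 2 * Hnorm α v := by
  refine ⟨4, by norm_num, fun s α t hs u₀ v hu0 hu hv => ?_⟩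
  set M : ℝ := ∑' ξ : ℤ, jap (ξ : ℝ) ^ (2 * (-s)) * ‖u₀ ξ‖ ^ 2 with hM
  set N : ℝ := ∑' ξ : ℤ, jap (ξ : ℝ) ^ (2 * α) * ‖v ξ‖ ^ 2 with hN
  have hMnn : 0 ≤ M := tsum_nonneg fun ξ =>
    mul_nonneg (Real.rpow_nonneg (jap_pos _).le _) (by positivity)
  have hNnn : 0 ≤ N := tsum_nonneg fun ξ =>
    mul_nonneg (Real.rpow_nonneg (jap_pos _).le _) (by positivity)
  set d : ℤ → ℂ := fun ξ =>
    (if ξ = 0 then v 0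
      else Complex.exp (-2 * Complex.I * t * (‖u₀ ξ‖ ^ 2 : ℝ) / (ξ : ℂ)) * v ξ) - v ξ
    with hd
  set g : ℤ → ℝ := fun ξ => jap (ξ : ℝ) ^ (2 * (α + 1 - 2 * s)) * ‖d ξ‖ ^ 2 with hg
  set h : ℤ → ℝ := fun ξ =>
    16 * t ^ 2 * M ^ 2 * (jap (ξ : ℝ) ^ (2 * α) * ‖v ξ‖ ^ 2) with hh
  -- pointwise bound
  have key : ∀ ξ : ℤ, g ξ ≤ h ξ := by
    intro ξ
    by_cases h0 : ξ = 0
    · subst h0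
      have : d 0 = 0 := by simp [hd]
      simp only [hg, this, norm_zero]
      have : (0:ℝ) ≤ h 0 := by
        simp only [hh]
        have := (jap_pos ((0:ℤ):ℝ)).le
        positivity
      simpa using this
    · set J : ℝ := jap (ξ : ℝ) with hJ
      have hJpos : 0 < J := jap_pos _
      set x : ℝ := ‖u₀ ξ‖ ^ 2 with hx
      have hxnn : 0 ≤ x := by positivity
      have ha1 : (1 : ℝ) ≤ |(ξ : ℝ)| := by
        rw [← Int.cast_abs]; exact_mod_cast Int.one_le_abs (by exact_mod_cast h0)
      have hapos : (0:ℝ) < |(ξ : ℝ)| := lt_of_lt_of_le one_pos ha1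
      have hJle : J ≤ 2 * |(ξ : ℝ)| := by
        rw [hJ]; unfold jap; linarith
      -- bound on the phase factor
      have hz : -2 * Complex.I * t * (x : ℂ) / (ξ : ℂ)
          = ((-2 * t * x / (ξ : ℝ) : ℝ) : ℂ) * Complex.I := by
        have hξ : ((ξ : ℝ) : ℂ) ≠ 0 := by
          exact_mod_cast (by exact_mod_cast h0 : ((ξ:ℝ)) ≠ 0)
        push_cast
        field_simp
      have hexp : ‖Complex.exp (-2 * Complex.I * t * (x : ℂ) / (ξ : ℂ)) - 1‖
          ≤ 2 * |t| * x / |(ξ : ℝ)| := by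
        rw [hz]
        refine le_trans (exp_I_sub_one_le _) ?_
        rw [abs_div, abs_mul, abs_mul]
        rw [abs_of_nonneg hxnn]
        rw [show |(-2 : ℝ)| = 2 by norm_num]
      have hdξ : ‖d ξ‖ ≤ (2 * |t| * x / |(ξ : ℝ)|) * ‖v ξ‖ := by
        have : d ξ = (Complex.exp (-2 * Complex.I * t * (x : ℂ) / (ξ : ℂ)) - 1) * v ξ := by
          simp only [hd, if_neg h0]; ring
        rw [this, norm_mul]
        exact mul_le_mul_of_nonneg_right hexp (norm_nonneg _)
      have hdsq : ‖d ξ‖ ^ 2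
          ≤ (2 * |t| * x / |(ξ : ℝ)|) ^ 2 * ‖v ξ‖ ^ 2 := by
        rw [← mul_pow]
        exact pow_le_pow_left₀ (norm_nonneg _) hdξ 2
      -- bound x by J^(2s) * M
      have hxM : x ≤ J ^ (2 * s) * M := by
        have hterm : J ^ (2 * (-s)) * x ≤ M :=
          hu.le_tsum ξ (fun b _ => mul_nonneg (Real.rpow_nonneg (jap_pos _).le _) (by positivity))
        have := mul_le_mul_of_nonneg_left hterm (le_of_lt (Real.rpow_pos_of_pos hJpos (2*s)))
        calc x = J ^ (2 * s) * (J ^ (2 * (-s)) * x) := by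
              rw [← mul_assoc, ← Real.rpow_add hJpos]
              norm_num
          _ ≤ J ^ (2 * s) * M := this
      have hx2 : x ^ 2 ≤ (J ^ (2 * s)) ^ 2 * M ^ 2 := by
        rw [← mul_pow]
        exact pow_le_pow_left₀ hxnn hxM 2
      -- rpow algebra
      have hA : J ^ (2 * (α + 1 - 2 * s)) * (J ^ (2 * s)) ^ 2
          = J ^ (2 * α) * J ^ (2 : ℝ) := by
        rw [← Real.rpow_natCast (J ^ (2*s)) 2, ← Real.rpow_mul hJpos.le,
          ← Real.rpow_add hJpos, ← Real.rpow_add hJpos]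
        norm_num
        ring_nf
      have hJ2 : J ^ (2 : ℝ) ≤ 4 * |(ξ : ℝ)| ^ 2 := by
        rw [show (2:ℝ) = ((2:ℕ):ℝ) by norm_num, Real.rpow_natCast]
        nlinarith
      -- combine
      have hApos : (0:ℝ) < J ^ (2 * (α + 1 - 2 * s)) := Real.rpow_pos_of_pos hJpos _
      have hBpos : (0:ℝ) < J ^ (2 * α) := Real.rpow_pos_of_pos hJpos _
      have step1 : g ξ ≤ J ^ (2 * (α + 1 - 2 * s)) *
          ((2 * |t| * x / |(ξ : ℝ)|) ^ 2 * ‖v ξ‖ ^ 2) :=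
        mul_le_mul_of_nonneg_left hdsq hApos.le
      have step2 : J ^ (2 * (α + 1 - 2 * s)) * (2 * |t| * x / |(ξ : ℝ)|) ^ 2
          ≤ 16 * t ^ 2 * M ^ 2 * J ^ (2 * α) := by
        have hasq : (0:ℝ) < |(ξ : ℝ)| ^ 2 := by positivity
        have expand : (2 * |t| * x) ^ 2 = 4 * t ^ 2 * x ^ 2 := by
          rw [mul_pow, mul_pow, sq_abs]; norm_num
        have key2 : J ^ (2 * (α + 1 - 2 * s)) * (4 * t ^ 2 * x ^ 2)
            ≤ 16 * t ^ 2 * M ^ 2 * J ^ (2 * α) * |(ξ : ℝ)| ^ 2 := by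
          calc J ^ (2 * (α + 1 - 2 * s)) * (4 * t ^ 2 * x ^ 2)
              ≤ J ^ (2 * (α + 1 - 2 * s)) * (4 * t ^ 2 * ((J ^ (2 * s)) ^ 2 * M ^ 2)) := by
                have : (0:ℝ) ≤ 4 * t ^ 2 := by positivity
                exact mul_le_mul_of_nonneg_left
                  (mul_le_mul_of_nonneg_left hx2 this) hApos.le
            _ = 4 * t ^ 2 * M ^ 2 * (J ^ (2 * (α + 1 - 2 * s)) * (J ^ (2 * s)) ^ 2) := by ring
            _ = 4 * t ^ 2 * M ^ 2 * (J ^ (2 * α) * J ^ (2 : ℝ)) := by rw [hA]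
            _ ≤ 4 * t ^ 2 * M ^ 2 * (J ^ (2 * α) * (4 * |(ξ : ℝ)| ^ 2)) := by
                have : (0:ℝ) ≤ 4 * t ^ 2 * M ^ 2 := by positivity
                exact mul_le_mul_of_nonneg_left
                  (mul_le_mul_of_nonneg_left hJ2 hBpos.le) this
            _ = 16 * t ^ 2 * M ^ 2 * J ^ (2 * α) * |(ξ : ℝ)| ^ 2 := by ring
        calc J ^ (2 * (α + 1 - 2 * s)) * (2 * |t| * x / |(ξ : ℝ)|) ^ 2
            = J ^ (2 * (α + 1 - 2 * s)) * (4 * t ^ 2 * x ^ 2) / |(ξ : ℝ)| ^ 2 := by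
              rw [div_pow, expand]; ring
          _ ≤ 16 * t ^ 2 * M ^ 2 * J ^ (2 * α) := by
              rw [div_le_iff₀ hasq]; exact key2
      calc g ξ ≤ J ^ (2 * (α + 1 - 2 * s)) * (2 * |t| * x / |(ξ : ℝ)|) ^ 2
            * ‖v ξ‖ ^ 2 := by rw [mul_assoc]; exact step1
        _ ≤ 16 * t ^ 2 * M ^ 2 * J ^ (2 * α) * ‖v ξ‖ ^ 2 :=
            mul_le_mul_of_nonneg_right step2 (by positivity)
        _ = h ξ := by rw [hh]; ring
  -- summability and tsum bound
  have hhsummable : Summable h := by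
    rw [hh]
    exact hv.mul_left (16 * t ^ 2 * M ^ 2)
  have hgsummable : Summable g :=
    Summable.of_nonneg_of_le
      (fun ξ => mul_nonneg (Real.rpow_nonneg (jap_pos _).le _) (by positivity))
      key hhsummable
  have htsum : ∑' ξ, g ξ ≤ ∑' ξ, h ξ := hgsummable.tsum_le_tsum key hhsummable
  have htsumh : ∑' ξ, h ξ = 16 * t ^ 2 * M ^ 2 * N := by
    rw [hh, hN]; exact tsum_mul_left
  have final : Hnorm (α + 1 - 2 * s) d ≤ Real.sqrt (16 * t ^ 2 * M ^ 2 * N) := by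
    unfold Hnorm
    exact Real.sqrt_le_sqrt (by rw [← htsumh]; exact htsum)
  have hsqrt : Real.sqrt (16 * t ^ 2 * M ^ 2 * N) = 4 * |t| * M * Real.sqrt N := by
    rw [Real.sqrt_mul (by positivity) N]
    congr 1
    rw [show 16 * t ^ 2 * M ^ 2 = (4 * |t| * M) ^ 2 by rw [mul_pow, mul_pow, sq_abs]; ring]
    exact Real.sqrt_sq (by positivity)
  have hHn : Hnorm (-s) u₀ ^ 2 = M := Real.sq_sqrt hMnn
  have hHv : Hnorm α v = Real.sqrt N := rfl
  rw [hHv, hHn, ← hsqrt]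
  exact final
end

section
/- Let s < 1/2, γ ∈ ℝ, N > 0, T > 0. There exists a constant C = C(N, T) such that for all f, g ∈ L²(T) with f̂(0)=ĝ(0)=0, ‖f‖_{L²} + ‖g‖_{L²} < N, and f − g ∈ H^γ(T), the resonant operators satisfy sup_{t∈[0,T]} ‖R[f](t) − R[g](t)‖_{H^γ(T)} ≤ C ‖f − g‖_{H^γ(T)}. -/
noncomputable def Rop (s : ℝ) (f : ℤ → ℂ) (t : ℝ) (ξ : ℤ) : ℂ :=
  if ξ = 0 then 0
  else f ξ * Complex.exp (2 * Complex.I * ((jap (ξ : ℝ) ^ (2 * s) / (ξ : ℝ)) *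
      ‖f ξ‖ ^ 2 * t : ℝ)) * Complex.exp (Complex.I * ((ξ : ℝ) ^ 3 * t : ℝ))

lemma abs_exp_mul_I_sub_one_le (θ : ℝ) :
    ‖Complex.exp ((θ : ℂ) * Complex.I) - 1‖ ≤ |θ| := by
  rw [Complex.exp_mul_I]
  have h1 : (Complex.cos θ + Complex.sin θ * Complex.I - 1)
      = ((Real.cos θ - 1 : ℝ) : ℂ) + ((Real.sin θ : ℝ) : ℂ) * Complex.I := by
    rw [← Complex.ofReal_cos, ← Complex.ofReal_sin]; push_cast; ring
  rw [h1, Complex.norm_def, Complex.normSq_add_mul_I]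
  have a := Real.cos_two_mul (θ / 2)
  have b := Real.sin_sq_add_cos_sq (θ / 2)
  have c := Real.sin_sq_add_cos_sq θ
  have h4 : Real.sin (θ / 2) ^ 2 ≤ (θ / 2) ^ 2 := Real.sin_sq_le_sq
  have h2 : (2 : ℝ) * (θ / 2) = θ := by ring
  rw [h2] at a
  calc Real.sqrt ((Real.cos θ - 1) ^ 2 + Real.sin θ ^ 2)
      ≤ Real.sqrt (θ ^ 2) := Real.sqrt_le_sqrt (by nlinarith)
    _ = |θ| := Real.sqrt_sq_eq_abs θ

lemma abs_exp_I_diff_le (x y : ℝ) :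
    ‖Complex.exp ((x : ℂ) * Complex.I) - Complex.exp ((y : ℂ) * Complex.I)‖
      ≤ |x - y| := by
  have h : Complex.exp ((x : ℂ) * Complex.I) - Complex.exp ((y : ℂ) * Complex.I)
      = Complex.exp ((y : ℂ) * Complex.I) * (Complex.exp (((x - y : ℝ) : ℂ) * Complex.I) - 1) := by
    rw [mul_sub, mul_one, ← Complex.exp_add]; push_cast; ring_nf
  rw [h, norm_mul]
  have h1 : ‖Complex.exp ((y : ℂ) * Complex.I)‖ = 1 := by
    simp [Complex.norm_exp]
  rw [h1, one_mul]
  exact abs_exp_mul_I_sub_one_le _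

lemma pointwise_bound (s T N : ℝ) (hs : s < 1 / 2) (hT : 0 < T) (hN : 0 < N)
    (f g : ℤ → ℂ) (t : ℝ) (ht0 : 0 ≤ t) (htT : t ≤ T) (ξ : ℤ) (hξ : ξ ≠ 0)
    (hFG : ‖f ξ‖ + ‖g ξ‖ ≤ N) :
    ‖Rop s f t ξ - Rop s g t ξ‖
      ≤ (1 + 4 * T * N ^ 2) * ‖f ξ - g ξ‖ := by
  set F := ‖f ξ‖ with hF
  set G := ‖g ξ‖ with hG
  set D := ‖f ξ - g ξ‖ with hDdef
  have hF0 : 0 ≤ F := norm_nonneg _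
  have hG0 : 0 ≤ G := norm_nonneg _
  have hD0 : 0 ≤ D := norm_nonneg _
  have hFN : F ≤ N := by linarith
  have hGN : G ≤ N := by linarith
  have hD : |F - G| ≤ D := abs_norm_sub_norm_le _ _
  set w : ℝ := jap (ξ : ℝ) ^ (2 * s) with hw
  set rf : ℝ := 2 * ((w / (ξ : ℝ)) * F ^ 2 * t) with hrf
  set rg : ℝ := 2 * ((w / (ξ : ℝ)) * G ^ 2 * t) with hrg
  have hξ1 : (1 : ℝ) ≤ |(ξ : ℝ)| := by
    have := Int.one_le_abs hξ
    calc (1:ℝ) ≤ (|ξ| : ℤ) := by exact_mod_cast this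
      _ = |(ξ : ℝ)| := by push_cast; ring
  have hξpos : (0 : ℝ) < |(ξ : ℝ)| := lt_of_lt_of_le one_pos hξ1
  have hjap1 : (1 : ℝ) ≤ jap (ξ : ℝ) := by
    have := abs_nonneg ((ξ : ℝ)); unfold jap; linarith
  have hw2 : w ≤ 2 * |(ξ : ℝ)| := by
    have h1 : w ≤ jap (ξ : ℝ) ^ (1 : ℝ) :=
      Real.rpow_le_rpow_of_exponent_le hjap1 (by linarith)
    rw [Real.rpow_one] at h1
    have : jap (ξ : ℝ) ≤ 2 * |(ξ : ℝ)| := by unfold jap; linarith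
    linarith
  have hw0 : 0 < w := Real.rpow_pos_of_pos (by unfold jap; positivity) _
  -- rewrite the difference
  have hrop : Rop s f t ξ - Rop s g t ξ
      = ((f ξ) * Complex.exp ((rf : ℂ) * Complex.I)
          - (g ξ) * Complex.exp ((rg : ℂ) * Complex.I))
        * Complex.exp (Complex.I * (((ξ : ℝ) ^ 3 * t : ℝ) : ℂ)) := by
    simp only [Rop, if_neg hξ, hrf, hrg, hw, ← hF, ← hG]
    push_cast
    ring_nf
  rw [hrop, norm_mul]
  have he3 : ‖Complex.exp (Complex.I * (((ξ : ℝ) ^ 3 * t : ℝ) : ℂ))‖ = 1 := by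
    rw [mul_comm]; exact Complex.norm_exp_ofReal_mul_I _
  rw [he3, mul_one]
  have hsplit : (f ξ) * Complex.exp ((rf : ℂ) * Complex.I)
      - (g ξ) * Complex.exp ((rg : ℂ) * Complex.I)
      = (f ξ - g ξ) * Complex.exp ((rf : ℂ) * Complex.I)
        + (g ξ) * (Complex.exp ((rf : ℂ) * Complex.I) - Complex.exp ((rg : ℂ) * Complex.I)) := by
    ring
  rw [hsplit]
  have he1 : ‖Complex.exp ((rf : ℂ) * Complex.I)‖ = 1 :=
    Complex.norm_exp_ofReal_mul_I _
  have step1 : ‖(f ξ - g ξ) * Complex.exp ((rf : ℂ) * Complex.I)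
        + (g ξ) * (Complex.exp ((rf : ℂ) * Complex.I) - Complex.exp ((rg : ℂ) * Complex.I))‖
      ≤ D + G * |rf - rg| := by
    calc ‖_‖ ≤ ‖(f ξ - g ξ) * Complex.exp ((rf : ℂ) * Complex.I)‖
        + ‖(g ξ) * (Complex.exp ((rf : ℂ) * Complex.I)
            - Complex.exp ((rg : ℂ) * Complex.I))‖ := norm_add_le _ _
      _ = D + G * ‖Complex.exp ((rf : ℂ) * Complex.I)
            - Complex.exp ((rg : ℂ) * Complex.I)‖ := by
          rw [norm_mul, norm_mul, he1, mul_one]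
      _ ≤ D + G * |rf - rg| := by
          gcongr
          exact abs_exp_I_diff_le _ _
  refine step1.trans ?_
  have hdiff : rf - rg = 2 * (w / (ξ : ℝ)) * t * ((F - G) * (F + G)) := by
    rw [hrf, hrg]; ring
  have hwdiv : w / |(ξ : ℝ)| ≤ 2 := by
    rw [div_le_iff₀ hξpos]; linarith
  have hFG2 : |F + G| ≤ N := by
    rw [abs_of_nonneg (by positivity)]; exact hFG
  have habs : |rf - rg| ≤ 2 * 2 * T * (D * N) := by
    have heq : |rf - rg| = 2 * (w / |(ξ : ℝ)|) * t * (|F - G| * |F + G|) := by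
      rw [hdiff, abs_mul, abs_mul, abs_mul, abs_mul, abs_div, abs_of_pos hw0,
        abs_of_nonneg ht0]
      norm_num
    rw [heq]
    gcongr
    all_goals first | exact hwdiv | exact htT | exact hD | exact hFG2
  have hstep : G * |rf - rg| ≤ N * (2 * 2 * T * (D * N)) :=
    mul_le_mul hGN habs (abs_nonneg _) hN.le
  nlinarith [hN.le, hT.le]

lemma jap_nonneg (x : ℝ) : 0 ≤ jap x := by unfold jap; positivity

lemma abs_le_Hnorm0 (f : ℤ → ℂ) (hf : Summable (fun ξ : ℤ => ‖f ξ‖ ^ 2))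
    (ξ : ℤ) : ‖f ξ‖ ≤ Hnorm 0 f := by
  have h0 : Hnorm 0 f = Real.sqrt (∑' ξ : ℤ, ‖f ξ‖ ^ 2) := by
    unfold Hnorm
    norm_num
  rw [h0]
  have hle : ‖f ξ‖ ^ 2 ≤ ∑' ξ : ℤ, ‖f ξ‖ ^ 2 :=
    Summable.le_tsum hf ξ (fun _ _ => sq_nonneg _)
  calc ‖f ξ‖ = Real.sqrt (‖f ξ‖ ^ 2) :=
        (Real.sqrt_sq (norm_nonneg _)).symm
    _ ≤ _ := Real.sqrt_le_sqrt hle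

theorem resonant_operator_lipschitz
    (s γ N T : ℝ) (hs : s < 1 / 2) (hN : 0 < N) (hT : 0 < T) :
    ∃ C : ℝ, 0 < C ∧ ∀ f g : ℤ → ℂ,
      f 0 = 0 → g 0 = 0 →
      Summable (fun ξ : ℤ => ‖f ξ‖ ^ 2) →
      Summable (fun ξ : ℤ => ‖g ξ‖ ^ 2) →
      Hnorm 0 f + Hnorm 0 g < N →
      Summable (fun ξ : ℤ => jap (ξ : ℝ) ^ (2 * γ) * ‖f ξ - g ξ‖ ^ 2) →
      ∀ t ∈ Set.Icc (0 : ℝ) T,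
        Hnorm γ (fun ξ => Rop s f t ξ - Rop s g t ξ) ≤
          C * Hnorm γ (fun ξ => f ξ - g ξ) := by
  refine ⟨1 + 4 * T * N ^ 2, by positivity, ?_⟩
  intro f g hf0 hg0 hsf hsg hsmall hsumD t ht
  set C : ℝ := 1 + 4 * T * N ^ 2 with hC
  have hC0 : 0 < C := by positivity
  have hHg0 : 0 ≤ Hnorm 0 g := Real.sqrt_nonneg _
  have hHf0 : 0 ≤ Hnorm 0 f := Real.sqrt_nonneg _
  have hpt : ∀ ξ : ℤ, jap (ξ : ℝ) ^ (2 * γ) * ‖Rop s f t ξ - Rop s g t ξ‖ ^ 2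
      ≤ C ^ 2 * (jap (ξ : ℝ) ^ (2 * γ) * ‖f ξ - g ξ‖ ^ 2) := by
    intro ξ
    by_cases hξ : ξ = 0
    · subst hξ
      simp [Rop, hf0, hg0]
    · have hFG : ‖f ξ‖ + ‖g ξ‖ ≤ N := by
        have h1 := abs_le_Hnorm0 f hsf ξ
        have h2 := abs_le_Hnorm0 g hsg ξ
        linarith
      have hb := pointwise_bound s T N hs hT hN f g t ht.1 ht.2 ξ hξ hFG
      have hsq : ‖Rop s f t ξ - Rop s g t ξ‖ ^ 2
          ≤ (C * ‖f ξ - g ξ‖) ^ 2 := by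
        have h0 := norm_nonneg (Rop s f t ξ - Rop s g t ξ)
        have hb' : ‖Rop s f t ξ - Rop s g t ξ‖
            ≤ C * ‖f ξ - g ξ‖ := by rw [hC]; exact hb
        exact pow_le_pow_left₀ h0 hb' 2
      have hwpos : 0 ≤ jap (ξ : ℝ) ^ (2 * γ) := Real.rpow_nonneg (jap_nonneg _) _
      calc jap (ξ : ℝ) ^ (2 * γ) * ‖Rop s f t ξ - Rop s g t ξ‖ ^ 2
          ≤ jap (ξ : ℝ) ^ (2 * γ) * (C * ‖f ξ - g ξ‖) ^ 2 := by
            exact mul_le_mul_of_nonneg_left hsq hwpos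
        _ = C ^ 2 * (jap (ξ : ℝ) ^ (2 * γ) * ‖f ξ - g ξ‖ ^ 2) := by ring
  have hsum2 : Summable (fun ξ : ℤ =>
      C ^ 2 * (jap (ξ : ℝ) ^ (2 * γ) * ‖f ξ - g ξ‖ ^ 2)) :=
    hsumD.mul_left _
  have hsumL : Summable (fun ξ : ℤ =>
      jap (ξ : ℝ) ^ (2 * γ) * ‖Rop s f t ξ - Rop s g t ξ‖ ^ 2) := by
    apply Summable.of_nonneg_of_le (fun ξ => ?_) hpt hsum2
    exact mul_nonneg (Real.rpow_nonneg (jap_nonneg _) _) (sq_nonneg _)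
  have hts : (∑' ξ : ℤ, jap (ξ : ℝ) ^ (2 * γ) * ‖Rop s f t ξ - Rop s g t ξ‖ ^ 2)
      ≤ C ^ 2 * ∑' ξ : ℤ, jap (ξ : ℝ) ^ (2 * γ) * ‖f ξ - g ξ‖ ^ 2 := by
    rw [← tsum_mul_left]
    exact Summable.tsum_le_tsum hpt hsumL hsum2
  unfold Hnorm
  calc Real.sqrt (∑' ξ : ℤ, jap (ξ : ℝ) ^ (2 * γ)
        * ‖Rop s f t ξ - Rop s g t ξ‖ ^ 2)
      ≤ Real.sqrt (C ^ 2 * ∑' ξ : ℤ, jap (ξ : ℝ) ^ (2 * γ)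
        * ‖f ξ - g ξ‖ ^ 2) := Real.sqrt_le_sqrt hts
    _ = C * Real.sqrt (∑' ξ : ℤ, jap (ξ : ℝ) ^ (2 * γ) * ‖f ξ - g ξ‖ ^ 2) := by
        rw [Real.sqrt_mul (sq_nonneg C), Real.sqrt_sq hC0.le]
end

section
/- Let s > 1/2 and 0 < δ, ε < 1. Then there exist f, g ∈ L²(T) with ‖f‖_{L²} + ‖g‖_{L²} ≤ 2 and ‖f − g‖_{L²} ≤ δ, but sup_{t∈[0,ε]} ‖R[f](t) − R[g](t)‖_{L²} ≥ 1. In particular, the map f ↦ R[f] from L²(T) to L^∞([0,ε]; L²(T)) is not uniformly continuous on bounded sets. -/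
lemma Hnorm_single (a : ℤ → ℂ) (ξ0 : ℤ) (h : ∀ ξ, ξ ≠ ξ0 → a ξ = 0) :
    Hnorm 0 a = ‖a ξ0‖ := by
  have hj : ∀ ξ : ℤ, jap (ξ : ℝ) ^ (2 * (0:ℝ)) = 1 := by
    intro ξ; rw [mul_zero, Real.rpow_zero]
  unfold Hnorm
  rw [tsum_eq_single ξ0 (by intro b hb; rw [h b hb]; simp)]
  rw [hj ξ0, one_mul, Real.sqrt_sq (norm_nonneg _)]

theorem resonant_operator_not_uniformly_continuous
    (s δ ε : ℝ) (hs : 1 / 2 < s) (hδ : 0 < δ) (hδ1 : δ < 1)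
    (hε : 0 < ε) (hε1 : ε < 1) :
    ∃ f g : ℤ → ℂ, f 0 = 0 ∧ g 0 = 0 ∧
      Hnorm 0 f + Hnorm 0 g ≤ 2 ∧
      Hnorm 0 (fun ξ => f ξ - g ξ) ≤ δ ∧
      ∃ t ∈ Set.Icc (0 : ℝ) ε,
        Hnorm 0 (fun ξ => Rop s f t ξ - Rop s g t ξ) ≥ 1 := by
  -- parameters
  set b : ℝ := 2 * s - 1 with hbdef
  have hb : 0 < b := by simp only [hbdef]; linarith
  have h2δ : 0 < 2 - δ := by linarith
  have hden : 0 < 2 * δ * (2 - δ) * ε := by positivity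
  set C : ℝ := max 1 (Real.pi / (2 * δ * (2 - δ) * ε)) with hCdef
  have hC1 : (1:ℝ) ≤ C := le_max_left _ _
  have hC0 : (0:ℝ) < C := lt_of_lt_of_le one_pos hC1
  set N : ℕ := ⌈C ^ (1 / b)⌉₊ with hNdef
  set ξ0 : ℤ := (N : ℤ) + 1 with hξ0def
  have hξ0pos : (0:ℤ) < ξ0 := by positivity
  have hξ0ne : ξ0 ≠ 0 := ne_of_gt hξ0pos
  have hξ0R : (0:ℝ) < (ξ0 : ℝ) := by exact_mod_cast hξ0pos
  have hjap : jap (ξ0 : ℝ) = 1 + (ξ0 : ℝ) := by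
    unfold jap; rw [abs_of_pos hξ0R]
  set κ : ℝ := jap (ξ0 : ℝ) ^ (2 * s) / (ξ0 : ℝ) with hκdef
  have h1ξ : (0:ℝ) < 1 + (ξ0:ℝ) := by linarith
  have hκpos : 0 < κ := by
    rw [hκdef, hjap]
    exact div_pos (Real.rpow_pos_of_pos h1ξ _) hξ0R
  -- lower bound on κ
  have hκC : C ≤ κ := by
    have hx : C ^ (1 / b) ≤ 1 + (ξ0 : ℝ) := by
      have h1 : C ^ (1 / b) ≤ (N : ℝ) := Nat.le_ceil _
      have h2 : ((ξ0 : ℤ) : ℝ) = (N : ℝ) + 1 := by rw [hξ0def]; push_cast; ring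
      rw [h2]; linarith
    have hxnn : (0:ℝ) ≤ C ^ (1 / b) := Real.rpow_nonneg hC0.le _
    have hpow : C ≤ (1 + (ξ0:ℝ)) ^ b := by
      calc C = (C ^ (1 / b)) ^ b := by
              rw [← Real.rpow_mul hC0.le, one_div_mul_cancel hb.ne', Real.rpow_one]
            _ ≤ (1 + (ξ0:ℝ)) ^ b := Real.rpow_le_rpow hxnn hx hb.le
    have hsplit : (1 + (ξ0:ℝ)) ^ (2 * s) = (1 + (ξ0:ℝ)) ^ b * (1 + (ξ0:ℝ)) := by
      rw [show (2 * s) = b + 1 by rw [hbdef]; ring, Real.rpow_add h1ξ, Real.rpow_one]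
    have hfrac : (1 + (ξ0:ℝ)) ^ b ≤ κ := by
      rw [hκdef, hjap, hsplit]
      rw [mul_div_assoc]
      have : (1:ℝ) ≤ (1 + (ξ0:ℝ)) / (ξ0:ℝ) := by
        rw [le_div_iff₀ hξ0R]; linarith
      nlinarith [Real.rpow_pos_of_pos h1ξ b]
    linarith
  -- the time
  set t : ℝ := Real.pi / (2 * κ * δ * (2 - δ)) with htdef
  have hdpos : 0 < 2 * κ * δ * (2 - δ) := by positivity
  have ht0 : 0 ≤ t := le_of_lt (div_pos Real.pi_pos hdpos)
  have htε : t ≤ ε := by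
    rw [htdef, div_le_iff₀ hdpos]
    have h1 : Real.pi / (2 * δ * (2 - δ) * ε) ≤ κ := le_trans (le_max_right _ _) hκC
    rw [div_le_iff₀ hden] at h1
    nlinarith
  have key : 2 * κ * t = 2 * (κ * (1 - δ) ^ 2 * t) + Real.pi := by
    have : 2 * κ * δ * (2 - δ) * t = Real.pi := by
      rw [htdef]; field_simp
    nlinarith
  -- the functions
  refine ⟨fun ξ => if ξ = ξ0 then 1 else 0,
          fun ξ => if ξ = ξ0 then ((1 - δ : ℝ) : ℂ) else 0,
          by simp [hξ0ne.symm], by simp [hξ0ne.symm], ?_, ?_, t, ⟨ht0, htε⟩, ?_⟩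
  · rw [Hnorm_single _ ξ0 (by intro ξ hξ; simp [hξ]),
        Hnorm_single _ ξ0 (by intro ξ hξ; simp [hξ])]
    simp only [if_true, norm_one, Complex.norm_real, Real.norm_eq_abs, eq_self_iff_true]
    rw [abs_of_pos (by linarith : (0:ℝ) < 1 - δ)]
    linarith
  · rw [Hnorm_single _ ξ0 (by intro ξ hξ; simp [hξ])]
    simp only [if_true, eq_self_iff_true]
    rw [show (1 : ℂ) - ((1 - δ : ℝ) : ℂ) = ((δ : ℝ) : ℂ) by push_cast; ring,
      Complex.norm_real, Real.norm_eq_abs, abs_of_pos hδ]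
  · -- the key estimate
    have hsupp : ∀ ξ, ξ ≠ ξ0 →
        Rop s (fun ξ => if ξ = ξ0 then 1 else 0) t ξ
          - Rop s (fun ξ => if ξ = ξ0 then ((1 - δ : ℝ) : ℂ) else 0) t ξ = 0 := by
      intro ξ hξ
      unfold Rop
      by_cases h0 : ξ = 0 <;> simp [h0, hξ]
    rw [ge_iff_le, Hnorm_single _ ξ0 hsupp]
    unfold Rop
    rw [if_neg hξ0ne, if_neg hξ0ne]
    simp only [if_true, eq_self_iff_true, norm_one, one_pow, one_mul, Complex.norm_real, Real.norm_eq_abs]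
    rw [abs_of_pos (by linarith : (0:ℝ) < 1 - δ)]
    rw [← hκdef]
    have e1 : Complex.exp (2 * Complex.I * ((κ * 1 * t : ℝ) : ℂ)) =
        - Complex.exp (2 * Complex.I * ((κ * (1 - δ) ^ 2 * t : ℝ) : ℂ)) := by
      rw [show (2 * Complex.I * ((κ * 1 * t : ℝ) : ℂ)) =
          2 * Complex.I * ((κ * (1 - δ) ^ 2 * t : ℝ) : ℂ) + Real.pi * Complex.I by
        push_cast
        have : (((2 : ℝ) * κ * t : ℝ) : ℂ) = (((2 * (κ * (1 - δ) ^ 2 * t) + Real.pi : ℝ)) : ℂ) := by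
          exact_mod_cast congrArg (fun x : ℝ => (x : ℂ)) key
        push_cast at this
        ring_nf
        ring_nf at this
        linear_combination Complex.I * this]
      rw [Complex.exp_add, Complex.exp_pi_mul_I]
      ring
    rw [mul_one] at e1 ⊢
    rw [e1]
    rw [show -Complex.exp (2 * Complex.I * ((κ * (1 - δ) ^ 2 * t : ℝ) : ℂ)) *
          Complex.exp (Complex.I * (((ξ0:ℝ) ^ 3 * t : ℝ) : ℂ)) -
        ((1 - δ : ℝ) : ℂ) * Complex.exp (2 * Complex.I * ((κ * (1 - δ) ^ 2 * t : ℝ) : ℂ)) *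
          Complex.exp (Complex.I * (((ξ0:ℝ) ^ 3 * t : ℝ) : ℂ))
        = -(((2 - δ : ℝ) : ℂ)) * (Complex.exp (2 * Complex.I * ((κ * (1 - δ) ^ 2 * t : ℝ) : ℂ)) *
            Complex.exp (Complex.I * (((ξ0:ℝ) ^ 3 * t : ℝ) : ℂ))) by push_cast; ring]
    rw [norm_mul, norm_neg, norm_mul, Complex.norm_real, Real.norm_eq_abs, abs_of_pos h2δ]
    have habs1 : ‖Complex.exp (2 * Complex.I * ((κ * (1 - δ) ^ 2 * t : ℝ) : ℂ))‖ = 1 := by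
      rw [Complex.norm_exp,
        show (2 * Complex.I * ((κ * (1 - δ) ^ 2 * t : ℝ) : ℂ)).re = 0 by
          simp [pow_two, Complex.mul_re, Complex.mul_im], Real.exp_zero]
    have habs2 : ‖Complex.exp (Complex.I * (((ξ0:ℝ) ^ 3 * t : ℝ) : ℂ))‖ = 1 := by
      rw [Complex.norm_exp,
        show (Complex.I * (((ξ0:ℝ) ^ 3 * t : ℝ) : ℂ)).re = 0 by
          simp [pow_succ, Complex.mul_re, Complex.mul_im], Real.exp_zero]
    rw [habs1, habs2]
    linarith
end

section
/- Let 0 ≤ s < 1/2 and 0 < δ with 10δ < 1 − 2s, and let 0 < γ < 1 − 10δ. Then there is a constant C such that for all nonzero integers ξ, ξ₁, ξ₂, ξ₃ with ξ₁+ξ₂+ξ₃ = ξ and (ξ₁+ξ₂)(ξ₂+ξ₃)(ξ₃+ξ₁) ≠ 0: ⟨ξ₂⟩^{s+δ} ⟨ξ⟩^{γ−s} / (⟨ξ₁⟩^{γ−s−δ} ⟨ξ₃⟩^{1−s−δ} (|ξ₁+ξ₂||ξ₂+ξ₃||ξ₃+ξ₁|)^{1/2−3δ}) ≤ C, where ⟨x⟩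 = 1+|x|. -/
open Real

set_option maxHeartbeats 1000000 in
private lemma core_lp (s δ γ c X X1 X2 X3 P Q R : ℝ)
    (hs0 : 0 ≤ s) (hs : s < 1/2) (hδ : 0 < δ)
    (hδs : 10*δ < 1 - 2*s) (hγ0 : 0 < γ) (hγ : γ < 1 - 10*δ)
    (hc : 0 ≤ c) (hX : 0 ≤ X) (hX1 : 0 ≤ X1) (hX2 : 0 ≤ X2) (hX3 : 0 ≤ X3)
    (hP : 0 ≤ P) (hQ : 0 ≤ Q) (hR : 0 ≤ R)
    (h0 : X2 ≤ c + (P + X1))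
    (h1 : X2 ≤ c + (Q + X3)) (h2 : X2 ≤ c + (R + X)) (h3 : X1 ≤ c + (R + X3))
    (h4 : X1 ≤ c + (Q + X)) (h5 : X ≤ c + (Q + X1)) (h6 : X ≤ c + (P + X3)) :
    (s+δ)*X2 + (γ-s)*X ≤ 4*c + ((γ-s-δ)*X1 + (1-s-δ)*X3 + (1/2-3*δ)*(P+Q+R)) := by
  rcases le_or_gt (s+δ) γ with hI | hII
  · -- Case I : s + δ ≤ γ
    set θ : ℝ := max 0 (γ - 1/2 + 4*δ) with hθdef
    have hθ0 : 0 ≤ θ := le_max_left _ _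
    have hθ1 : γ - 1/2 + 4*δ ≤ θ := le_max_right _ _
    have hθ2 : θ ≤ γ - s - δ := max_le (by linarith) (by linarith)
    have hθ3 : θ ≤ 1/2 - 3*δ := max_le (by linarith) (by linarith)
    have h7 : X2 ≤ 2*c + P + R + X3 := by linarith
    have p1 : (s+δ)*X2 ≤ (s+δ)*(2*c + P + R + X3) :=
      mul_le_mul_of_nonneg_left h7 (by linarith)
    have p2 : θ*X ≤ θ*(c + (Q + X1)) := mul_le_mul_of_nonneg_left h5 hθ0
    have p3 : (γ-s-θ)*X ≤ (γ-s-θ)*(c + (P + X3)) :=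
      mul_le_mul_of_nonneg_left h6 (by linarith)
    have n1 : 0 ≤ (γ-s-δ-θ)*X1 := mul_nonneg (by linarith) hX1
    have n2 : 0 ≤ (1-s-δ-(γ+δ-θ))*X3 := mul_nonneg (by linarith) hX3
    have n3 : 0 ≤ (1/2-3*δ-(γ+δ-θ))*P := mul_nonneg (by linarith) hP
    have n4 : 0 ≤ (1/2-3*δ-θ)*Q := mul_nonneg (by linarith) hQ
    have n5 : 0 ≤ (1/2-3*δ-(s+δ))*R := mul_nonneg (by linarith) hR
    have n6 : 0 ≤ (4-(γ+s+2*δ))*c := mul_nonneg (by linarith) hc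
    linarith [p1, p2, p3, n1, n2, n3, n4, n5, n6]
  · rcases le_or_gt s γ with hIIa | hIIb
    · -- Case IIa : s ≤ γ < s + δ
      have h7 : X2 ≤ 2*c + P + R + X3 := by linarith
      have p1 : (s+δ)*X2 ≤ (s+δ)*(2*c + P + R + X3) :=
        mul_le_mul_of_nonneg_left h7 (by linarith)
      have p2 : (γ-s)*X ≤ (γ-s)*(c + (P + X3)) :=
        mul_le_mul_of_nonneg_left h6 (by linarith)
      have p3 : (s+δ-γ)*X1 ≤ (s+δ-γ)*(c + (R + X3)) :=
        mul_le_mul_of_nonneg_left h3 (by linarith)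
      have n2 : 0 ≤ (1-s-δ-(s+2*δ))*X3 := mul_nonneg (by linarith) hX3
      have n3 : 0 ≤ (1/2-3*δ-(γ+δ))*P := mul_nonneg (by linarith) hP
      have n4 : 0 ≤ (1/2-3*δ)*Q := mul_nonneg (by linarith) hQ
      have n5 : 0 ≤ (1/2-3*δ-(2*s+2*δ-γ))*R := mul_nonneg (by linarith) hR
      have n6 : 0 ≤ (4-(2*s+3*δ))*c := mul_nonneg (by linarith) hc
      linarith [p1, p2, p3, n2, n3, n4, n5, n6]
    · -- Case IIb : γ < s
      set v : ℝ := max (2*s+5*δ-γ-1/2) (δ+γ) with hvdef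
      have hv1 : 2*s+5*δ-γ-1/2 ≤ v := le_max_left _ _
      have hv2 : δ+γ ≤ v := le_max_right _ _
      have hv3 : v ≤ 1/2-3*δ := max_le (by linarith) (by linarith)
      have hv4 : v ≤ 2*s+3*δ-γ := max_le (by linarith) (by linarith)
      have hv5 : v ≤ 2*s+δ-γ := max_le (by linarith) (by linarith)
      have p1 : ((δ+γ+v)/2)*X2 ≤ ((δ+γ+v)/2)*(c + (Q + X3)) :=
        mul_le_mul_of_nonneg_left h1 (by linarith)
      have p2 : (s+δ-(δ+γ+v)/2)*X2 ≤ (s+δ-(δ+γ+v)/2)*(c + (R + X)) :=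
        mul_le_mul_of_nonneg_left h2 (by linarith)
      have p3 : (s+δ-γ-(v-δ-γ)/2)*X1 ≤ (s+δ-γ-(v-δ-γ)/2)*(c + (R + X3)) :=
        mul_le_mul_of_nonneg_left h3 (by linarith)
      have p4 : ((v-δ-γ)/2)*X1 ≤ ((v-δ-γ)/2)*(c + (Q + X)) :=
        mul_le_mul_of_nonneg_left h4 (by linarith)
      have n2 : 0 ≤ (1-s-δ-(s+2*δ))*X3 := mul_nonneg (by linarith) hX3
      have n3 : 0 ≤ (1/2-3*δ)*P := mul_nonneg (by linarith) hP
      have n4 : 0 ≤ (1/2-3*δ-v)*Q := mul_nonneg (by linarith) hQ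
      have n5 : 0 ≤ (1/2-3*δ-(2*s+2*δ-γ-v))*R := mul_nonneg (by linarith) hR
      have n6 : 0 ≤ (4-(2*s+2*δ-γ))*c := mul_nonneg (by linarith) hc
      linarith [p1, p2, p3, p4, n2, n3, n4, n5, n6]

private lemma jap_sub (u v w : ℝ) (h : u = v + w) (hv : 1 ≤ |v|) :
    1 + |u| ≤ 2 * (|v| * (1 + |w|)) := by
  have habs : |u| ≤ |v| + |w| := h ▸ abs_add_le v w
  nlinarith [abs_nonneg w, mul_nonneg (by linarith : (0:ℝ) ≤ 2*|v| - 1) (abs_nonneg w)]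

private lemma log_helper {x y z : ℝ} (hx : 0 < x) (hy : 0 < y) (hz : 0 < z)
    (h : x ≤ 2 * (y * z)) : Real.log x ≤ Real.log 2 + (Real.log y + Real.log z) := by
  have := Real.log_le_log hx h
  rwa [Real.log_mul (by norm_num) (by positivity), Real.log_mul hy.ne' hz.ne'] at this

theorem nonresonant_multiplier_bound
    (s δ γ : ℝ) (hs0 : 0 ≤ s) (hs : s < 1 / 2) (hδ : 0 < δ)
    (hδs : 10 * δ < 1 - 2 * s) (hγ0 : 0 < γ) (hγ : γ < 1 - 10 * δ) :
    ∃ C : ℝ, ∀ ξ ξ₁ ξ₂ ξ₃ : ℤ, ξ ≠ 0 → ξ₁ ≠ 0 → ξ₂ ≠ 0 → ξ₃ ≠ 0 →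
      ξ₁ + ξ₂ + ξ₃ = ξ → (ξ₁ + ξ₂) * (ξ₂ + ξ₃) * (ξ₃ + ξ₁) ≠ 0 →
      jap (ξ₂ : ℝ) ^ (s + δ) * jap (ξ : ℝ) ^ (γ - s) /
        (jap (ξ₁ : ℝ) ^ (γ - s - δ) * jap (ξ₃ : ℝ) ^ (1 - s - δ) *
          (|(ξ₁ : ℝ) + ξ₂| * |(ξ₂ : ℝ) + ξ₃| * |(ξ₃ : ℝ) + ξ₁|) ^ (1 / 2 - 3 * δ)) ≤ C := by
  refine ⟨16, fun ξ ξ₁ ξ₂ ξ₃ hξ hξ1 hξ2 hξ3 hsum hprod => ?_⟩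
  -- names
  set a : ℝ := jap (ξ : ℝ) with ha_def
  set a1 : ℝ := jap (ξ₁ : ℝ) with ha1_def
  set a2 : ℝ := jap (ξ₂ : ℝ) with ha2_def
  set a3 : ℝ := jap (ξ₃ : ℝ) with ha3_def
  set p : ℝ := |(ξ₁ : ℝ) + ξ₂| with hp_def
  set q : ℝ := |(ξ₂ : ℝ) + ξ₃| with hq_def
  set r : ℝ := |(ξ₃ : ℝ) + ξ₁| with hr_def
  have hne12 : ξ₁ + ξ₂ ≠ 0 := fun h => hprod (by rw [h, zero_mul, zero_mul])
  have hne23 : ξ₂ + ξ₃ ≠ 0 := fun h => hprod (by rw [h, mul_zero, zero_mul])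
  have hne31 : ξ₃ + ξ₁ ≠ 0 := fun h => hprod (by rw [h, mul_zero])
  have int_abs : ∀ m : ℤ, m ≠ 0 → (1:ℝ) ≤ |(m:ℝ)| := by
    intro m hm
    rw [← Int.cast_abs]
    exact_mod_cast Int.one_le_abs hm
  have hp1 : 1 ≤ p := by
    rw [hp_def, show (ξ₁:ℝ) + ξ₂ = ((ξ₁ + ξ₂ : ℤ) : ℝ) by push_cast; ring]
    exact int_abs _ hne12
  have hq1 : 1 ≤ q := by
    rw [hq_def, show (ξ₂:ℝ) + ξ₃ = ((ξ₂ + ξ₃ : ℤ) : ℝ) by push_cast; ring]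
    exact int_abs _ hne23
  have hr1 : 1 ≤ r := by
    rw [hr_def, show (ξ₃:ℝ) + ξ₁ = ((ξ₃ + ξ₁ : ℤ) : ℝ) by push_cast; ring]
    exact int_abs _ hne31
  have japle : ∀ x : ℝ, 1 ≤ jap x := fun x => by
    unfold jap; linarith [abs_nonneg x]
  have ha : 1 ≤ a := japle _
  have ha1 : 1 ≤ a1 := japle _
  have ha2 : 1 ≤ a2 := japle _
  have ha3 : 1 ≤ a3 := japle _
  have hsumR : (ξ₁:ℝ) + ξ₂ + ξ₃ = (ξ:ℝ) := by exact_mod_cast congrArg (Int.cast : ℤ → ℝ) hsum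
  -- multiplicative bounds
  have b0 : a2 ≤ 2 * (p * a1) := by
    have h := jap_sub (ξ₂:ℝ) ((ξ₁:ℝ)+ξ₂) (-(ξ₁:ℝ)) (by ring) hp1
    rw [abs_neg] at h
    simpa [ha2_def, hp_def, ha1_def, jap] using h
  have b1 : a2 ≤ 2 * (q * a3) := by
    have h := jap_sub (ξ₂:ℝ) ((ξ₂:ℝ)+ξ₃) (-(ξ₃:ℝ)) (by ring) hq1
    rw [abs_neg] at h
    simpa [ha2_def, hq_def, ha3_def, jap] using h
  have b2 : a2 ≤ 2 * (r * a) := by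
    have h := jap_sub (ξ₂:ℝ) (-((ξ₃:ℝ)+ξ₁)) (ξ:ℝ) (by linarith [hsumR]) (by rwa [abs_neg])
    rw [abs_neg] at h
    simpa [ha2_def, hr_def, ha_def, jap] using h
  have b3 : a1 ≤ 2 * (r * a3) := by
    have h := jap_sub (ξ₁:ℝ) ((ξ₃:ℝ)+ξ₁) (-(ξ₃:ℝ)) (by ring) hr1
    rw [abs_neg] at h
    simpa [ha1_def, hr_def, ha3_def, jap] using h
  have b4 : a1 ≤ 2 * (q * a) := by
    have h := jap_sub (ξ₁:ℝ) (-((ξ₂:ℝ)+ξ₃)) (ξ:ℝ) (by linarith [hsumR]) (by rwa [abs_neg])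
    rw [abs_neg] at h
    simpa [ha1_def, hq_def, ha_def, jap] using h
  have b5 : a ≤ 2 * (q * a1) := by
    have h := jap_sub (ξ:ℝ) ((ξ₂:ℝ)+ξ₃) (ξ₁:ℝ) (by linarith [hsumR]) hq1
    simpa [ha_def, hq_def, ha1_def, jap] using h
  have b6 : a ≤ 2 * (p * a3) := by
    have h := jap_sub (ξ:ℝ) ((ξ₁:ℝ)+ξ₂) (ξ₃:ℝ) (by linarith [hsumR]) hp1
    simpa [ha_def, hp_def, ha3_def, jap] using h
  -- positivity
  have hap : (0:ℝ) < a := by linarith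
  have ha1p : (0:ℝ) < a1 := by linarith
  have ha2p : (0:ℝ) < a2 := by linarith
  have ha3p : (0:ℝ) < a3 := by linarith
  have hpp : (0:ℝ) < p := by linarith
  have hqp : (0:ℝ) < q := by linarith
  have hrp : (0:ℝ) < r := by linarith
  have hD : (0:ℝ) < a1 ^ (γ - s - δ) * a3 ^ (1 - s - δ) * (p * q * r) ^ (1/2 - 3*δ) := by
    positivity
  rw [div_le_iff₀ hD]
  have hN : (0:ℝ) < a2 ^ (s + δ) * a ^ (γ - s) := by positivity
  have hRHS : (0:ℝ) < 16 * (a1 ^ (γ - s - δ) * a3 ^ (1 - s - δ) * (p * q * r) ^ (1/2 - 3*δ)) := by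
    positivity
  rw [← Real.log_le_log_iff hN hRHS]
  have e16 : Real.log 16 = 4 * Real.log 2 := by
    rw [show (16:ℝ) = 2^(4:ℕ) by norm_num, Real.log_pow]; push_cast; ring
  have eL : Real.log (a2 ^ (s+δ) * a ^ (γ-s))
      = (s+δ) * Real.log a2 + (γ-s) * Real.log a := by
    rw [Real.log_mul (ne_of_gt (by positivity)) (ne_of_gt (by positivity)),
        Real.log_rpow ha2p, Real.log_rpow hap]
  have eR : Real.log (16 * (a1 ^ (γ-s-δ) * a3 ^ (1-s-δ) * (p*q*r) ^ (1/2-3*δ)))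
      = 4 * Real.log 2 + ((γ-s-δ) * Real.log a1 + (1-s-δ) * Real.log a3
          + (1/2-3*δ) * (Real.log p + Real.log q + Real.log r)) := by
    rw [Real.log_mul (by norm_num) (ne_of_gt (by positivity)),
        Real.log_mul (ne_of_gt (by positivity)) (ne_of_gt (by positivity)),
        Real.log_mul (ne_of_gt (by positivity)) (ne_of_gt (by positivity)),
        Real.log_rpow ha1p, Real.log_rpow ha3p, Real.log_rpow (by positivity),
        Real.log_mul (ne_of_gt (by positivity)) (ne_of_gt (by positivity)),
        Real.log_mul (ne_of_gt (by positivity)) (ne_of_gt (by positivity)), e16]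
    try ring
  rw [eL, eR]
  have hc : 0 ≤ Real.log 2 := Real.log_nonneg (by norm_num)
  have key := core_lp s δ γ (Real.log 2) (Real.log a) (Real.log a1) (Real.log a2) (Real.log a3)
    (Real.log p) (Real.log q) (Real.log r) hs0 (by linarith) hδ (by linarith) hγ0 (by linarith)
    hc (Real.log_nonneg ha) (Real.log_nonneg ha1) (Real.log_nonneg ha2) (Real.log_nonneg ha3)
    (Real.log_nonneg hp1) (Real.log_nonneg hq1) (Real.log_nonneg hr1)
    (log_helper ha2p hpp ha1p b0)
    (log_helper ha2p hqp ha3p b1) (log_helper ha2p hrp hap b2) (log_helper ha1p hrp ha3p b3)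
    (log_helper ha1p hqp hap b4) (log_helper hap hqp ha1p b5) (log_helper hap hpp ha3p b6)
  linarith [key]
end

section
/- Let 0 ≤ s < 1/2, 0 < δ with 10δ < 1 − 2s, and 0 < γ ≤ 1. Then there is a constant C such that for all nonzero integers ξ, ξ₁, ξ₂, ξ₃ with ξ₁+ξ₂+ξ₃ = ξ and (ξ₁+ξ₂)(ξ₂+ξ₃)(ξ₃+ξ₁) ≠ 0: ⟨ξ₁⟩^{3s−1+δ} ⟨ξ₂⟩^{s+δ} ⟨ξ⟩^{γ−s} / (⟨ξ₃⟩^{1−s−δ} |ξ₁+ξ₂|^{3/2−2δ} |ξ₂+ξ₃|^{3/2−2δ} |ξ₃+ξ₁|^{3/2−2δ}) ≤ C, where ⟨x⟩ = 1+|x|. -/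
private lemma rpow_le_max_aux {x M : ℝ} (e : ℝ) (hx : 1 ≤ x) (hM : 1 ≤ M) (h : x ≤ M) :
    x ^ e ≤ M ^ (max e 0) := by
  rcases le_total e 0 with he | he
  · rw [max_eq_right he, Real.rpow_zero]
    exact Real.rpow_le_one_of_one_le_of_nonpos hx he
  · rw [max_eq_left he]
    exact Real.rpow_le_rpow (by linarith) h he

theorem quintilinear_multiplier_bound
    (s δ γ : ℝ) (hs0 : 0 ≤ s) (hs : s < 1 / 2) (hδ : 0 < δ)
    (hδs : 10 * δ < 1 - 2 * s) (hγ0 : 0 < γ) (hγ : γ ≤ 1) :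
    ∃ C : ℝ, ∀ ξ ξ₁ ξ₂ ξ₃ : ℤ, ξ ≠ 0 → ξ₁ ≠ 0 → ξ₂ ≠ 0 → ξ₃ ≠ 0 →
      ξ₁ + ξ₂ + ξ₃ = ξ → (ξ₁ + ξ₂) * (ξ₂ + ξ₃) * (ξ₃ + ξ₁) ≠ 0 →
      jap (ξ₁ : ℝ) ^ (3 * s - 1 + δ) * jap (ξ₂ : ℝ) ^ (s + δ) * jap (ξ : ℝ) ^ (γ - s) /
        (jap (ξ₃ : ℝ) ^ (1 - s - δ) * |(ξ₁ : ℝ) + ξ₂| ^ (3 / 2 - 2 * δ) *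
          |(ξ₂ : ℝ) + ξ₃| ^ (3 / 2 - 2 * δ) * |(ξ₃ : ℝ) + ξ₁| ^ (3 / 2 - 2 * δ)) ≤ C := by
  have hδ10 : δ < 1 / 10 := by linarith
  refine ⟨36, fun ξ ξ₁ ξ₂ ξ₃ hξ h1 h2 h3 hsum hne => ?_⟩
  have h12 : ξ₁ + ξ₂ ≠ 0 := by intro h; apply hne; rw [h, zero_mul, zero_mul]
  have h23 : ξ₂ + ξ₃ ≠ 0 := by intro h; apply hne; rw [h, mul_zero, zero_mul]
  have h31 : ξ₃ + ξ₁ ≠ 0 := by intro h; apply hne; rw [h, mul_zero]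
  set a : ℝ := (ξ₁ : ℝ) + ξ₂ with ha
  set b : ℝ := (ξ₂ : ℝ) + ξ₃ with hb
  set c : ℝ := (ξ₃ : ℝ) + ξ₁ with hc
  have castabs : ∀ m : ℤ, m ≠ 0 → 1 ≤ |(m : ℝ)| := by
    intro m hm
    have : (1 : ℤ) ≤ |m| := Int.one_le_abs hm
    calc (1 : ℝ) ≤ ((|m| : ℤ) : ℝ) := by exact_mod_cast this
      _ = |(m : ℝ)| := by push_cast; ring
  have ha1 : 1 ≤ |a| := by
    have := castabs _ h12; rw [ha]; push_cast at this ⊢; exact this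
  have hb1 : 1 ≤ |b| := by
    have := castabs _ h23; rw [hb]; push_cast at this ⊢; exact this
  have hc1 : 1 ≤ |c| := by
    have := castabs _ h31; rw [hc]; push_cast at this ⊢; exact this
  set N : ℝ := max (max |(ξ₁ : ℝ)| |(ξ₂ : ℝ)|) |(ξ₃ : ℝ)| with hNdef
  have hx1N : |(ξ₁ : ℝ)| ≤ N := le_trans (le_max_left _ _) (le_max_left _ _)
  have hx2N : |(ξ₂ : ℝ)| ≤ N := le_trans (le_max_right _ _) (le_max_left _ _)
  have hx3N : |(ξ₃ : ℝ)| ≤ N := le_max_right _ _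
  have hN1 : 1 ≤ N := le_trans (castabs _ h1) hx1N
  -- each |ξᵢ| is bounded by |a| + |b| + |c|
  have tri : ∀ x : ℝ, x = a - b + c ∨ x = a + b - c ∨ x = -a + b + c →
      |x| ≤ |a| + |b| + |c| := by
    intro x hx
    have k1 : |a - b| ≤ |a| + |b| := abs_sub _ _
    have k2 : |a + b| ≤ |a| + |b| := abs_add_le _ _
    rcases hx with h | h | h
    · calc |x| = |(a - b) + c| := by rw [h]
        _ ≤ |a - b| + |c| := abs_add_le _ _
        _ ≤ |a| + |b| + |c| := by linarith
    · calc |x| = |(a + b) - c| := by rw [h]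
        _ ≤ |a + b| + |c| := abs_sub _ _
        _ ≤ |a| + |b| + |c| := by linarith
    · calc |x| = |(b - a) + c| := by rw [h]; ring_nf
        _ ≤ |b - a| + |c| := abs_add_le _ _
        _ ≤ |a| + |b| + |c| := by linarith [abs_sub b a]
  have tri1 : 2 * |(ξ₁ : ℝ)| ≤ |a| + |b| + |c| := by
    have h : 2 * (ξ₁ : ℝ) = a - b + c := by rw [ha, hb, hc]; ring
    calc 2 * |(ξ₁ : ℝ)| = |2 * (ξ₁ : ℝ)| := by rw [abs_mul, abs_two]
      _ ≤ |a| + |b| + |c| := tri _ (Or.inl h)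
  have tri2 : 2 * |(ξ₂ : ℝ)| ≤ |a| + |b| + |c| := by
    have h : 2 * (ξ₂ : ℝ) = a + b - c := by rw [ha, hb, hc]; ring
    calc 2 * |(ξ₂ : ℝ)| = |2 * (ξ₂ : ℝ)| := by rw [abs_mul, abs_two]
      _ ≤ |a| + |b| + |c| := tri _ (Or.inr (Or.inl h))
  have tri3 : 2 * |(ξ₃ : ℝ)| ≤ |a| + |b| + |c| := by
    have h : 2 * (ξ₃ : ℝ) = -a + b + c := by rw [ha, hb, hc]; ring
    calc 2 * |(ξ₃ : ℝ)| = |2 * (ξ₃ : ℝ)| := by rw [abs_mul, abs_two]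
      _ ≤ |a| + |b| + |c| := tri _ (Or.inr (Or.inr h))
  -- sum of the three ≤ 3 * product
  have hsum3 : |a| + |b| + |c| ≤ 3 * (|a| * |b| * |c|) := by
    nlinarith [mul_le_mul ha1 hb1 (by norm_num : (0:ℝ) ≤ 1) (by linarith : (0:ℝ) ≤ |a|),
      mul_le_mul hb1 hc1 (by norm_num : (0:ℝ) ≤ 1) (by linarith : (0:ℝ) ≤ |b|),
      mul_le_mul ha1 hc1 (by norm_num : (0:ℝ) ≤ 1) (by linarith : (0:ℝ) ≤ |a|)]
  have hprod : 2 / 3 * N ≤ |a| * |b| * |c| := by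
    have : 2 * N ≤ 3 * (|a| * |b| * |c|) := by
      rw [hNdef]
      rcases max_cases (max |(ξ₁:ℝ)| |(ξ₂:ℝ)|) |(ξ₃:ℝ)| with ⟨h, _⟩ | ⟨h, _⟩
      · rw [h]
        rcases max_cases |(ξ₁:ℝ)| |(ξ₂:ℝ)| with ⟨h', _⟩ | ⟨h', _⟩ <;> rw [h'] <;> linarith
      · rw [h]; linarith
    linarith
  -- set up exponents
  set q : ℝ := 3 / 2 - 2 * δ with hqdef
  have hq0 : 0 ≤ q := by rw [hqdef]; linarith
  have hq2 : q ≤ 2 := by rw [hqdef]; linarith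
  -- jap bounds
  have hcast : (ξ₁ : ℝ) + ξ₂ + ξ₃ = (ξ : ℝ) := by exact_mod_cast congrArg (Int.cast : ℤ → ℝ) hsum
  have hξN : |(ξ : ℝ)| ≤ 3 * N := by
    rw [← hcast]
    calc |(ξ₁ : ℝ) + ξ₂ + ξ₃| ≤ |(ξ₁ : ℝ) + ξ₂| + |(ξ₃ : ℝ)| := abs_add_le _ _
      _ ≤ |(ξ₁ : ℝ)| + |(ξ₂ : ℝ)| + |(ξ₃ : ℝ)| := by linarith [abs_add_le (ξ₁:ℝ) (ξ₂:ℝ)]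
      _ ≤ 3 * N := by linarith
  have hj1 : 1 ≤ jap (ξ₁ : ℝ) := by rw [jap]; linarith [abs_nonneg (ξ₁:ℝ)]
  have hj2 : 1 ≤ jap (ξ₂ : ℝ) := by rw [jap]; linarith [abs_nonneg (ξ₂:ℝ)]
  have hj3 : 1 ≤ jap (ξ₃ : ℝ) := by rw [jap]; linarith [abs_nonneg (ξ₃:ℝ)]
  have hj : 1 ≤ jap (ξ : ℝ) := by rw [jap]; linarith [abs_nonneg (ξ:ℝ)]
  have hM1 : (1:ℝ) ≤ 4 * N := by linarith
  have hj1M : jap (ξ₁ : ℝ) ≤ 4 * N := by rw [jap]; linarith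
  have hj2M : jap (ξ₂ : ℝ) ≤ 4 * N := by rw [jap]; linarith
  have hjM : jap (ξ : ℝ) ≤ 4 * N := by rw [jap]; linarith
  -- exponent sum bound
  have hP : max (3 * s - 1 + δ) 0 + max (s + δ) 0 + max (γ - s) 0 ≤ q := by
    have hbm : max (s + δ) 0 = s + δ := max_eq_left (by linarith)
    have hcm : max (γ - s) 0 ≤ 1 - s := max_le (by linarith) (by linarith)
    rw [hqdef]
    rcases le_total (3 * s - 1 + δ) 0 with h | h
    · rw [max_eq_right h, hbm]; linarith
    · rw [max_eq_left h, hbm]; linarith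
  -- numerator bound
  have hnum : jap (ξ₁ : ℝ) ^ (3 * s - 1 + δ) * jap (ξ₂ : ℝ) ^ (s + δ) * jap (ξ : ℝ) ^ (γ - s)
      ≤ (4 * N) ^ q := by
    have b1 := rpow_le_max_aux (3 * s - 1 + δ) hj1 hM1 hj1M
    have b2 := rpow_le_max_aux (s + δ) hj2 hM1 hj2M
    have b3 := rpow_le_max_aux (γ - s) hj hM1 hjM
    calc jap (ξ₁ : ℝ) ^ (3 * s - 1 + δ) * jap (ξ₂ : ℝ) ^ (s + δ) * jap (ξ : ℝ) ^ (γ - s)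
        ≤ (4 * N) ^ max (3 * s - 1 + δ) 0 * (4 * N) ^ max (s + δ) 0 *
            (4 * N) ^ max (γ - s) 0 := by
          have n1 : (0:ℝ) ≤ jap (ξ₂ : ℝ) ^ (s + δ) :=
            Real.rpow_nonneg (by linarith) _
          have n2 : (0:ℝ) ≤ (4 * N) ^ max (3 * s - 1 + δ) 0 :=
            Real.rpow_nonneg (by linarith) _
          have n3 : (0:ℝ) ≤ jap (ξ : ℝ) ^ (γ - s) := Real.rpow_nonneg (by linarith) _
          have n4 : (0:ℝ) ≤ (4 * N) ^ max (s + δ) 0 := Real.rpow_nonneg (by linarith) _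
          exact mul_le_mul (mul_le_mul b1 b2 n1 n2) b3 n3 (mul_nonneg n2 n4)
      _ = (4 * N) ^ (max (3 * s - 1 + δ) 0 + max (s + δ) 0 + max (γ - s) 0) := by
          rw [← Real.rpow_add (by linarith), ← Real.rpow_add (by linarith)]
      _ ≤ (4 * N) ^ q := Real.rpow_le_rpow_of_exponent_le hM1 hP
  -- denominator bound
  have habc0 : (0:ℝ) ≤ 2 / 3 * N := by linarith
  have hden : (2 / 3 * N) ^ q ≤
      jap (ξ₃ : ℝ) ^ (1 - s - δ) * |a| ^ q * |b| ^ q * |c| ^ q := by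
    have e1 : (2 / 3 * N) ^ q ≤ (|a| * |b| * |c|) ^ q :=
      Real.rpow_le_rpow habc0 hprod hq0
    have e2 : (|a| * |b| * |c|) ^ q = |a| ^ q * |b| ^ q * |c| ^ q := by
      rw [Real.mul_rpow (mul_nonneg (abs_nonneg a) (abs_nonneg b)) (abs_nonneg c),
        Real.mul_rpow (abs_nonneg a) (abs_nonneg b)]
    have e3 : (1:ℝ) ≤ jap (ξ₃ : ℝ) ^ (1 - s - δ) := by
      have h0 := Real.rpow_le_rpow_of_exponent_le hj3
        (show (0:ℝ) ≤ 1 - s - δ by linarith)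
      rwa [Real.rpow_zero] at h0
    calc (2 / 3 * N) ^ q ≤ |a| ^ q * |b| ^ q * |c| ^ q := e1.trans_eq e2
      _ = 1 * (|a| ^ q * |b| ^ q * |c| ^ q) := by ring
      _ ≤ jap (ξ₃ : ℝ) ^ (1 - s - δ) * (|a| ^ q * |b| ^ q * |c| ^ q) := by
          apply mul_le_mul_of_nonneg_right e3
          exact mul_nonneg (mul_nonneg (Real.rpow_nonneg (abs_nonneg a) q)
            (Real.rpow_nonneg (abs_nonneg b) q)) (Real.rpow_nonneg (abs_nonneg c) q)
      _ = jap (ξ₃ : ℝ) ^ (1 - s - δ) * |a| ^ q * |b| ^ q * |c| ^ q := by ring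
  -- connect (4N)^q ≤ 36 * (2/3 N)^q
  have hmid : (4 * N) ^ q ≤ 36 * (2 / 3 * N) ^ q := by
    have e : (4 * N : ℝ) = 6 * (2 / 3 * N) := by ring
    rw [e, Real.mul_rpow (by norm_num) habc0]
    have h6 : (6:ℝ) ^ q ≤ 36 := by
      calc (6:ℝ) ^ q ≤ (6:ℝ) ^ (2:ℝ) := Real.rpow_le_rpow_of_exponent_le (by norm_num) hq2
        _ = 36 := by
          rw [show ((2:ℝ) = ((2:ℕ):ℝ)) by norm_num, Real.rpow_natCast]; norm_num
    exact mul_le_mul_of_nonneg_right h6 (Real.rpow_nonneg habc0 q)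
  -- finish
  have hDpos : 0 < jap (ξ₃ : ℝ) ^ (1 - s - δ) * |a| ^ q * |b| ^ q * |c| ^ q := by
    have p0 := Real.rpow_pos_of_pos (by linarith : (0:ℝ) < jap (ξ₃:ℝ)) (1 - s - δ)
    have p1 := Real.rpow_pos_of_pos (by linarith : (0:ℝ) < |a|) q
    have p2 := Real.rpow_pos_of_pos (by linarith : (0:ℝ) < |b|) q
    have p3 := Real.rpow_pos_of_pos (by linarith : (0:ℝ) < |c|) q
    exact mul_pos (mul_pos (mul_pos p0 p1) p2) p3
  rw [div_le_iff₀ hDpos]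
  calc jap (ξ₁ : ℝ) ^ (3 * s - 1 + δ) * jap (ξ₂ : ℝ) ^ (s + δ) * jap (ξ : ℝ) ^ (γ - s)
      ≤ (4 * N) ^ q := hnum
    _ ≤ 36 * (2 / 3 * N) ^ q := hmid
    _ ≤ 36 * (jap (ξ₃ : ℝ) ^ (1 - s - δ) * |a| ^ q * |b| ^ q * |c| ^ q) := by
        apply mul_le_mul_of_nonneg_left hden (by norm_num)
    _ = 36 * (jap (ξ₃ : ℝ) ^ (1 - s - δ) * |a| ^ q * |b| ^ q * |c| ^ q) := rfl
end

section
/- Let b ≥ 0, η be a Schwartz function on ℝ, and (a_ξ)_{ξ∈Z\{0\}} a real sequence with |a_ξ| ≤ A for all ξ. Let f ∈ L²(T) with f̂(0)=0 and define u(t,x) with space-time Fourier transform ũ(τ,ξ) = f̂(ξ) η̂(τ − a_ξ − ξ³). Then ‖⟨τ−ξ³⟩^b ũ(τ,ξ)‖_{L²_τ ℓ²_ξ} ≤ C(b) ‖⟨τ⟩^b η̂(τ)‖_{L²_τ} (1+A)^b ‖f‖_{L²}, where ⟨x⟩ = 1+|x|. -/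
lemma jap_one_le (x : ℝ) : 1 ≤ jap x := by
  have := abs_nonneg x; unfold jap; linarith

lemma jap_add_le (x y : ℝ) : jap (x + y) ≤ jap x * jap y := by
  have h := abs_add_le x y
  have hx := abs_nonneg x
  have hy := abs_nonneg y
  unfold jap
  nlinarith

lemma schwartz_integrable_jap (g : SchwartzMap ℝ ℂ) (c : ℝ) (hc : 0 ≤ c) :
    MeasureTheory.Integrable (fun τ : ℝ => jap τ ^ c * ‖g τ‖ ^ 2) := by
  obtain ⟨n, hn⟩ := exists_nat_ge c
  set M := (SchwartzMap.seminorm ℝ 0 0) g with hM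
  have hMg : ∀ x : ℝ, ‖g x‖ ≤ M := fun x => by
    simpa using SchwartzMap.norm_le_seminorm ℝ g x
  have hM0 : 0 ≤ M := le_trans (norm_nonneg _) (hMg 0)
  have hmaj : MeasureTheory.Integrable
      (fun τ : ℝ => M * 2 ^ n * (‖g τ‖ + ‖τ‖ ^ n * ‖g τ‖)) := by
    have h1 : MeasureTheory.Integrable (fun τ : ℝ => ‖g τ‖) := by
      simpa using g.integrable.norm
    exact ((h1.add (g.integrable_pow_mul _ n)).const_mul _)
  apply hmaj.mono'
  · apply Continuous.aestronglyMeasurable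
    apply Continuous.mul
    · apply Continuous.rpow_const (by unfold jap; continuity : Continuous jap)
      intro x; exact Or.inr hc
    · exact (continuous_norm.comp g.continuous).pow 2
  · filter_upwards with τ
    have h0 : (0:ℝ) ≤ jap τ ^ c * ‖g τ‖ ^ 2 := by
      have := (jap_pos τ).le; positivity
    rw [Real.norm_of_nonneg h0]
    have h1 : jap τ ^ c ≤ jap τ ^ (n : ℝ) :=
      Real.rpow_le_rpow_of_exponent_le (jap_one_le τ) hn
    have h2 : jap τ ^ (n : ℝ) = jap τ ^ n := Real.rpow_natCast _ n
    have h3 : jap τ ^ n ≤ 2 ^ n * (1 + |τ| ^ n) := by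
      have : jap τ ≤ 2 * max 1 |τ| := by
        have h4 : (1:ℝ) ≤ max 1 |τ| := le_max_left _ _
        have h5 : |τ| ≤ max 1 |τ| := le_max_right _ _
        unfold jap; linarith
      calc jap τ ^ n ≤ (2 * max 1 |τ|) ^ n :=
            pow_le_pow_left₀ (le_of_lt (jap_pos τ)) this n
        _ = 2 ^ n * (max 1 |τ|) ^ n := mul_pow _ _ _
        _ ≤ 2 ^ n * (1 + |τ| ^ n) := by
            gcongr
            rcases max_cases (1:ℝ) |τ| with ⟨h, _⟩ | ⟨h, _⟩ <;> rw [h]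
            · simp only [one_pow]
              nlinarith [pow_nonneg (abs_nonneg τ) n]
            · nlinarith [pow_nonneg (abs_nonneg τ) n]
    have h6 : ‖g τ‖ ^ 2 ≤ M * ‖g τ‖ := by
      have := hMg τ
      nlinarith [norm_nonneg (g τ)]
    calc jap τ ^ c * ‖g τ‖ ^ 2
        ≤ 2 ^ n * (1 + |τ| ^ n) * (M * ‖g τ‖) := by
          apply mul_le_mul (by rw [← h2] at h3; exact le_trans h1 h3) h6 (by positivity) (by positivity)
      _ = M * 2 ^ n * (‖g τ‖ + ‖τ‖ ^ n * ‖g τ‖) := by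
          simp only [Real.norm_eq_abs]; ring

theorem cutoff_resonant_solution_in_Xb
    (b : ℝ) (hb : 0 ≤ b) :
    ∃ C : ℝ, 0 < C ∧ ∀ (η : SchwartzMap ℝ ℂ) (a : ℤ → ℝ) (A : ℝ) (f : ℤ → ℂ),
      (∀ ξ : ℤ, |a ξ| ≤ A) → f 0 = 0 →
      Summable (fun ξ : ℤ => ‖f ξ‖ ^ 2) →
      Real.sqrt (∑' ξ : ℤ, ∫ τ : ℝ,
          jap (τ - (ξ : ℝ) ^ 3) ^ (2 * b) *
            ‖f ξ * FourierTransform.fourier (fun x : ℝ => η x) (τ - a ξ - (ξ : ℝ) ^ 3)‖ ^ 2) ≤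
        C * Real.sqrt (∫ τ : ℝ,
            jap τ ^ (2 * b) * ‖FourierTransform.fourier (fun x : ℝ => η x) τ‖ ^ 2) *
          (1 + A) ^ b * Hnorm 0 f := by
  refine ⟨1, one_pos, fun η a A f hA hf0 hsum => ?_⟩
  have hb2 : (0:ℝ) ≤ 2 * b := by linarith
  set g : ℝ → ℂ := fun τ => FourierTransform.fourier (fun x : ℝ => η x) τ with hgdef
  have hgeq : g = ⇑(SchwartzMap.fourierTransformCLM ℂ η) := rfl
  have hInt : MeasureTheory.Integrable (fun τ : ℝ => jap τ ^ (2*b) * ‖g τ‖ ^ 2) := by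
    rw [hgeq]
    exact schwartz_integrable_jap (SchwartzMap.fourierTransformCLM ℂ η) (2*b) hb2
  set I : ℝ := ∫ τ : ℝ, jap τ ^ (2*b) * ‖g τ‖ ^ 2 with hIdef
  have hI0 : 0 ≤ I := by
    apply MeasureTheory.integral_nonneg
    intro τ
    have := (jap_pos τ).le
    positivity
  have hA0 : (0:ℝ) ≤ A := le_trans (abs_nonneg _) (hA 0)
  have h1A : (0:ℝ) < 1 + A := by linarith
  -- per-frequency bound
  have hbound : ∀ ξ : ℤ,
      (∫ τ : ℝ, jap (τ - (ξ : ℝ) ^ 3) ^ (2 * b) *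
          ‖f ξ * g (τ - a ξ - (ξ : ℝ) ^ 3)‖ ^ 2) ≤
        ((1 + A) ^ (2*b) * I) * ‖f ξ‖ ^ 2 := by
    intro ξ
    have hintc : MeasureTheory.Integrable (fun τ : ℝ =>
        ((1+A) ^ (2*b) * ‖f ξ‖ ^ 2) *
          (jap (τ - (a ξ + (ξ:ℝ)^3)) ^ (2*b) * ‖g (τ - (a ξ + (ξ:ℝ)^3))‖ ^ 2)) :=
      (hInt.comp_sub_right (a ξ + (ξ:ℝ)^3)).const_mul _
    have step : (∫ τ : ℝ, jap (τ - (ξ : ℝ) ^ 3) ^ (2 * b) *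
          ‖f ξ * g (τ - a ξ - (ξ : ℝ) ^ 3)‖ ^ 2) ≤
        ∫ τ : ℝ, ((1+A) ^ (2*b) * ‖f ξ‖ ^ 2) *
          (jap (τ - (a ξ + (ξ:ℝ)^3)) ^ (2*b) * ‖g (τ - (a ξ + (ξ:ℝ)^3))‖ ^ 2) := by
      apply MeasureTheory.integral_mono_of_nonneg
      · filter_upwards with τ
        have := (jap_pos (τ - (ξ:ℝ)^3)).le
        positivity
      · exact hintc
      · filter_upwards with τ
        have hsub : τ - a ξ - (ξ:ℝ)^3 = τ - (a ξ + (ξ:ℝ)^3) := by ring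
        rw [hsub]
        have hjap : jap (τ - (ξ:ℝ)^3) ≤ jap (τ - (a ξ + (ξ:ℝ)^3)) * (1 + A) := by
          have h1 : τ - (ξ:ℝ)^3 = (τ - (a ξ + (ξ:ℝ)^3)) + a ξ := by ring
          rw [h1]
          refine le_trans (jap_add_le _ _) ?_
          have : jap (a ξ) ≤ 1 + A := by
            have := hA ξ; unfold jap; linarith
          exact mul_le_mul_of_nonneg_left this (jap_pos _).le
        have hjap2 : jap (τ - (ξ:ℝ)^3) ^ (2*b) ≤
            jap (τ - (a ξ + (ξ:ℝ)^3)) ^ (2*b) * (1+A) ^ (2*b) := by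
          rw [← Real.mul_rpow (jap_pos _).le h1A.le]
          exact Real.rpow_le_rpow (jap_pos _).le hjap hb2
        have habs : ‖f ξ * g (τ - (a ξ + (ξ:ℝ)^3))‖ ^ 2 =
            ‖f ξ‖ ^ 2 * ‖g (τ - (a ξ + (ξ:ℝ)^3))‖ ^ 2 := by
          rw [norm_mul, mul_pow]
        rw [habs]
        calc jap (τ - (ξ:ℝ)^3) ^ (2*b) *
              (‖f ξ‖ ^ 2 * ‖g (τ - (a ξ + (ξ:ℝ)^3))‖ ^ 2)
            ≤ (jap (τ - (a ξ + (ξ:ℝ)^3)) ^ (2*b) * (1+A) ^ (2*b)) *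
              (‖f ξ‖ ^ 2 * ‖g (τ - (a ξ + (ξ:ℝ)^3))‖ ^ 2) := by
              apply mul_le_mul_of_nonneg_right hjap2
              positivity
          _ = ((1+A) ^ (2*b) * ‖f ξ‖ ^ 2) *
              (jap (τ - (a ξ + (ξ:ℝ)^3)) ^ (2*b) * ‖g (τ - (a ξ + (ξ:ℝ)^3))‖ ^ 2) := by
              ring
    refine le_trans step ?_
    rw [MeasureTheory.integral_const_mul]
    rw [MeasureTheory.integral_sub_right_eq_self
      (fun τ => jap τ ^ (2*b) * ‖g τ‖ ^ 2) (a ξ + (ξ:ℝ)^3)]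
    rw [← hIdef]
    exact le_of_eq (by ring)
  -- summability & tsum comparison
  have hterm_nonneg : ∀ ξ : ℤ, 0 ≤ ∫ τ : ℝ, jap (τ - (ξ : ℝ) ^ 3) ^ (2 * b) *
      ‖f ξ * g (τ - a ξ - (ξ : ℝ) ^ 3)‖ ^ 2 := by
    intro ξ
    apply MeasureTheory.integral_nonneg
    intro τ
    have := (jap_pos (τ - (ξ:ℝ)^3)).le
    positivity
  have hsum2 : Summable (fun ξ : ℤ => ((1 + A) ^ (2*b) * I) * ‖f ξ‖ ^ 2) :=
    hsum.mul_left _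
  have hsum1 : Summable (fun ξ : ℤ => ∫ τ : ℝ, jap (τ - (ξ : ℝ) ^ 3) ^ (2 * b) *
      ‖f ξ * g (τ - a ξ - (ξ : ℝ) ^ 3)‖ ^ 2) :=
    Summable.of_nonneg_of_le hterm_nonneg hbound hsum2
  have htsum : (∑' ξ : ℤ, ∫ τ : ℝ, jap (τ - (ξ : ℝ) ^ 3) ^ (2 * b) *
      ‖f ξ * g (τ - a ξ - (ξ : ℝ) ^ 3)‖ ^ 2) ≤
      ((1 + A) ^ (2*b) * I) * ∑' ξ : ℤ, ‖f ξ‖ ^ 2 := by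
    rw [← tsum_mul_left]
    exact Summable.tsum_le_tsum hbound hsum1 hsum2
  have hS0 : 0 ≤ ∑' ξ : ℤ, ‖f ξ‖ ^ 2 :=
    tsum_nonneg (fun ξ => by positivity)
  have hHnorm : Hnorm 0 f = Real.sqrt (∑' ξ : ℤ, ‖f ξ‖ ^ 2) := by
    unfold Hnorm
    congr 1
    apply tsum_congr
    intro ξ
    rw [mul_zero, Real.rpow_zero, one_mul]
  have hrpow_sq : (1 + A) ^ (2*b) = ((1 + A) ^ b) ^ 2 := by
    rw [two_mul, Real.rpow_add h1A, sq]
  calc Real.sqrt (∑' ξ : ℤ, ∫ τ : ℝ, jap (τ - (ξ : ℝ) ^ 3) ^ (2 * b) *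
          ‖f ξ * g (τ - a ξ - (ξ : ℝ) ^ 3)‖ ^ 2)
      ≤ Real.sqrt (((1 + A) ^ (2*b) * I) * ∑' ξ : ℤ, ‖f ξ‖ ^ 2) :=
        Real.sqrt_le_sqrt htsum
    _ = (1 + A) ^ b * Real.sqrt I * Real.sqrt (∑' ξ : ℤ, ‖f ξ‖ ^ 2) := by
        rw [Real.sqrt_mul (by positivity), Real.sqrt_mul (by positivity), hrpow_sq,
          Real.sqrt_sq (by positivity)]
    _ = 1 * Real.sqrt I * (1 + A) ^ b * Hnorm 0 f := by
        rw [hHnorm]; ring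
end
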